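/- For every d = (d₁,d₂,d₃) ∈ ℝ³ with d₁, d₃ ∈ (-π,0) and d₂ ∈ (0,π), the function ℝ³ → ℝ given by x ↦ Re S(x + i·d) (where x + i·d := (x₁+id₁, x₂+id₂, x₃+id₃)) is strictly concave on ℝ³. -/

import Mathlib

open Real

/-- The dilogarithm `Li₂(z) = -∫₀¹ Log(1 - z t)/t dt`. -/
noncomputable def Li2 (z : ℂ) : ℂ :=
  -∫ t in (0:ℝ)..1, Complex.log (1 - z * (t : ℂ)) / (t : ℂ)

/-- The potential function `S`. -/
noncomputable def pot (y₁ y₂ y₃ : ℂ) : ℂ :=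
  Complex.I * (y₁ ^ 2 - y₁ * y₂ + y₂ * y₃ + y₃ ^ 2 / 2) +
    (-(π : ℂ) * y₁ + (π : ℂ) * y₃) +
    Complex.I * Li2 (-Complex.exp y₁) - Complex.I * Li2 (-Complex.exp y₂) +
    3 * Complex.I * Li2 (-Complex.exp y₃)

noncomputable def cE (d x : ℝ) : ℂ := Complex.exp ((x : ℂ) + (d : ℂ) * Complex.I)

lemma cE_re (d x : ℝ) : (cE d x).re = Real.exp x * Real.cos d := by
  simp [cE, Complex.exp_re]

lemma cE_im (d x : ℝ) : (cE d x).im = Real.exp x * Real.sin d := by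
  simp [cE, Complex.exp_im]

lemma normSq_lb (d x t : ℝ) (ht : 0 ≤ t) :
    Real.sin d ^ 2 ≤ Complex.normSq (1 + cE d x * (t : ℂ)) := by
  have h : Complex.normSq (1 + cE d x * (t : ℂ)) =
      (1 + Real.exp x * Real.cos d * t) ^ 2 + (Real.exp x * Real.sin d * t) ^ 2 := by
    simp [Complex.normSq_apply, Complex.add_re, Complex.add_im, Complex.mul_re, Complex.mul_im,
      cE_re, cE_im]
    ring
  rw [h]
  nlinarith [sq_nonneg (Real.exp x * t + Real.cos d), Real.sin_sq_add_cos_sq d,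
    sq_nonneg (Real.exp x * t), mul_nonneg (Real.exp_pos x).le ht]

lemma normSq_pos (d x t : ℝ) (hd : Real.sin d ≠ 0) (ht : 0 ≤ t) :
    0 < Complex.normSq (1 + cE d x * (t : ℂ)) :=
  lt_of_lt_of_le (by positivity) (normSq_lb d x t ht)

lemma mem_slit (d x t : ℝ) (hd : Real.sin d ≠ 0) (ht : 0 ≤ t) :
    1 + cE d x * (t : ℂ) ∈ Complex.slitPlane := by
  rcases eq_or_lt_of_le ht with h | h
  · left
    simp [← h]
  · right
    have : (1 + cE d x * (t : ℂ)).im = Real.exp x * Real.sin d * t := by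
      simp [Complex.add_im, Complex.mul_im, cE_re, cE_im]
    rw [this]
    exact mul_ne_zero (mul_ne_zero (Real.exp_pos x).ne' hd) h.ne'

lemma hasDerivAt_log_x (d t x : ℝ) (h : 1 + cE d x * (t : ℂ) ∈ Complex.slitPlane) :
    HasDerivAt (fun x : ℝ => Complex.log (1 + cE d x * (t : ℂ)))
      (cE d x * (t : ℂ) / (1 + cE d x * (t : ℂ))) x := by
  have h2 : HasDerivAt (fun z : ℂ => 1 + Complex.exp (z + (d : ℂ) * Complex.I) * (t : ℂ))
      (Complex.exp ((x : ℂ) + (d : ℂ) * Complex.I) * (t : ℂ)) (x : ℂ) := by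
    have := (((Complex.hasDerivAt_exp ((x : ℂ) + (d : ℂ) * Complex.I)).comp (x : ℂ)
      ((hasDerivAt_id ((x : ℂ))).add_const ((d : ℂ) * Complex.I))).mul_const
      ((t : ℂ))).const_add 1
    simpa using this
  have h1 := (h2.clog (by simpa [cE] using h)).comp_ofReal
  simpa [cE] using h1

lemma hasDerivAt_log_t (d x t : ℝ) (h : 1 + cE d x * (t : ℂ) ∈ Complex.slitPlane) :
    HasDerivAt (fun t : ℝ => Complex.log (1 + cE d x * (t : ℂ)))
      (cE d x / (1 + cE d x * (t : ℂ))) t := by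
  have h2 : HasDerivAt (fun w : ℂ => 1 + cE d x * w) (cE d x) (t : ℂ) := by
    simpa using ((hasDerivAt_id ((t : ℂ))).const_mul (cE d x)).const_add 1
  have h1 := (h2.clog h).comp_ofReal
  simpa using h1

lemma norm_bound (d x t : ℝ) (hd : Real.sin d ≠ 0) (ht : 0 ≤ t) :
    ‖cE d x / (1 + cE d x * (t : ℂ))‖ ≤ Real.exp x / |Real.sin d| := by
  rw [norm_div]
  have h1 : ‖cE d x‖ = Real.exp x := by
    simp [cE, Complex.norm_exp]
  have h2 : |Real.sin d| ≤ ‖1 + cE d x * (t : ℂ)‖ := by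
    rw [Complex.norm_def]
    calc |Real.sin d| = Real.sqrt (Real.sin d ^ 2) := (Real.sqrt_sq_eq_abs _).symm
    _ ≤ _ := Real.sqrt_le_sqrt (normSq_lb d x t ht)
  rw [h1]
  gcongr

lemma log_bound (d x : ℝ) (hd : Real.sin d ≠ 0) :
    ∀ t ∈ Set.Icc (0:ℝ) 1, ‖Complex.log (1 + cE d x * (t : ℂ))‖ ≤ (Real.exp x / |Real.sin d|) * t := by
  have H := norm_image_sub_le_of_norm_deriv_le_segment'
    (f := fun t : ℝ => Complex.log (1 + cE d x * (t : ℂ)))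
    (f' := fun t : ℝ => cE d x / (1 + cE d x * (t : ℂ))) (a := 0) (b := 1)
    (C := Real.exp x / |Real.sin d|)
    (fun s hs => (hasDerivAt_log_t d x s (mem_slit d x s hd hs.1)).hasDerivWithinAt)
    (fun s hs => norm_bound d x s hd hs.1)
  intro t ht
  have := H t ht
  simpa using this

lemma contOn_F (d x : ℝ) (hd : Real.sin d ≠ 0) :
    ContinuousOn (fun t : ℝ => Complex.log (1 + cE d x * (t : ℂ)) / (t : ℂ)) (Set.Ioc 0 1) := by
  intro t ht
  have hc : ContinuousAt (fun t : ℝ => 1 + cE d x * (t : ℂ)) t :=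
    (continuous_const.add (continuous_const.mul Complex.continuous_ofReal)).continuousAt
  have h1 : ContinuousAt (fun t : ℝ => Complex.log (1 + cE d x * (t : ℂ))) t :=
    hc.clog (mem_slit d x t hd ht.1.le)
  exact (h1.div (Complex.continuous_ofReal.continuousAt)
    (by exact_mod_cast ht.1.ne')).continuousWithinAt

lemma integrable_F (d x : ℝ) (hd : Real.sin d ≠ 0) :
    IntervalIntegrable (fun t : ℝ => Complex.log (1 + cE d x * (t : ℂ)) / (t : ℂ))
      MeasureTheory.volume 0 1 := by
  rw [intervalIntegrable_iff, Set.uIoc_of_le zero_le_one]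
  apply MeasureTheory.Integrable.mono' (g := fun _ => Real.exp x / |Real.sin d|)
  · exact MeasureTheory.integrableOn_const (by simp)
  · exact (contOn_F d x hd).aestronglyMeasurable measurableSet_Ioc
  · filter_upwards [MeasureTheory.ae_restrict_mem measurableSet_Ioc] with t ht
    rw [norm_div]
    have hnt : ‖(t : ℂ)‖ = t := by
      simp [abs_of_pos ht.1]
    rw [hnt]
    rw [div_le_iff₀ ht.1]
    calc ‖Complex.log (1 + cE d x * (t : ℂ))‖ ≤ (Real.exp x / |Real.sin d|) * t :=
      log_bound d x hd t ⟨ht.1.le, ht.2⟩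
    _ = Real.exp x / |Real.sin d| * t := rfl

lemma contOn_F' (d x : ℝ) (hd : Real.sin d ≠ 0) :
    ContinuousOn (fun t : ℝ => cE d x / (1 + cE d x * (t : ℂ))) (Set.Icc 0 1) := by
  intro t ht
  exact (ContinuousAt.div continuousAt_const
    ((continuous_const.add (continuous_const.mul Complex.continuous_ofReal)).continuousAt)
    (Complex.slitPlane_ne_zero (mem_slit d x t hd ht.1))).continuousWithinAt

lemma hasDerivAt_Li2exp (d : ℝ) (hd : Real.sin d ≠ 0) (x₀ : ℝ) :
    HasDerivAt (fun x : ℝ => Li2 (-Complex.exp ((x : ℂ) + (d : ℂ) * Complex.I)))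
      (-Complex.log (1 + Complex.exp ((x₀ : ℂ) + (d : ℂ) * Complex.I))) x₀ := by
  have hmeas : ∀ᶠ x in nhds x₀, MeasureTheory.AEStronglyMeasurable
      (fun t : ℝ => Complex.log (1 + cE d x * (t : ℂ)) / (t : ℂ))
      (MeasureTheory.volume.restrict (Set.uIoc (0:ℝ) 1)) := by
    refine Filter.Eventually.of_forall fun x => ?_
    exact ((contOn_F d x hd).mono (by rw [Set.uIoc_of_le zero_le_one])).aestronglyMeasurable
      measurableSet_uIoc
  have hF'meas : MeasureTheory.AEStronglyMeasurable
      (fun t : ℝ => cE d x₀ / (1 + cE d x₀ * (t : ℂ)))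
      (MeasureTheory.volume.restrict (Set.uIoc (0:ℝ) 1)) := by
    refine ((contOn_F' d x₀ hd).mono ?_).aestronglyMeasurable measurableSet_uIoc
    rw [Set.uIoc_of_le zero_le_one]
    exact Set.Ioc_subset_Icc_self
  have hbound : ∀ᵐ t ∂(MeasureTheory.volume), t ∈ Set.uIoc (0:ℝ) 1 →
      ∀ x ∈ Metric.ball x₀ 1, ‖cE d x / (1 + cE d x * (t : ℂ))‖
        ≤ Real.exp (x₀ + 1) / |Real.sin d| := by
    refine Filter.Eventually.of_forall fun t ht x hx => ?_
    have ht' : (0:ℝ) < t ∧ t ≤ 1 := by rwa [Set.uIoc_of_le zero_le_one] at ht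
    have hx' : x ≤ x₀ + 1 := by
      have h := abs_sub_lt_iff.1 (by simpa [Real.dist_eq] using Metric.mem_ball.1 hx)
      linarith [h.1]
    calc ‖cE d x / (1 + cE d x * (t : ℂ))‖ ≤ Real.exp x / |Real.sin d| :=
      norm_bound d x t hd ht'.1.le
    _ ≤ Real.exp (x₀ + 1) / |Real.sin d| := by
      gcongr
  have hdiff : ∀ᵐ t ∂(MeasureTheory.volume), t ∈ Set.uIoc (0:ℝ) 1 →
      ∀ x ∈ Metric.ball x₀ 1, HasDerivAt
        (fun x : ℝ => Complex.log (1 + cE d x * (t : ℂ)) / (t : ℂ))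
        (cE d x / (1 + cE d x * (t : ℂ))) x := by
    refine Filter.Eventually.of_forall fun t ht x _ => ?_
    have ht' : (0:ℝ) < t ∧ t ≤ 1 := by rwa [Set.uIoc_of_le zero_le_one] at ht
    have h := (hasDerivAt_log_x d t x (mem_slit d x t hd ht'.1.le)).div_const ((t : ℂ))
    have heq : cE d x * (t : ℂ) / (1 + cE d x * (t : ℂ)) / (t : ℂ)
        = cE d x / (1 + cE d x * (t : ℂ)) := by
      rw [div_div, mul_comm (1 + cE d x * (t : ℂ)) ((t : ℂ)), ← div_div,
        mul_div_assoc, div_self (by exact_mod_cast ht'.1.ne'), mul_one]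
    rw [heq] at h
    exact h
  have key := (intervalIntegral.hasDerivAt_integral_of_dominated_loc_of_deriv_le
    (F := fun (x t : ℝ) => Complex.log (1 + cE d x * (t : ℂ)) / (t : ℂ))
    (F' := fun (x t : ℝ) => cE d x / (1 + cE d x * (t : ℂ)))
    (bound := fun _ => Real.exp (x₀ + 1) / |Real.sin d|)
    (Metric.ball_mem_nhds x₀ one_pos) hmeas (integrable_F d x₀ hd) hF'meas hbound intervalIntegrable_const hdiff).2
  have hFTC : (∫ t in (0:ℝ)..1, cE d x₀ / (1 + cE d x₀ * (t : ℂ)))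
      = Complex.log (1 + cE d x₀) := by
    have h := intervalIntegral.integral_eq_sub_of_hasDerivAt
      (f := fun t : ℝ => Complex.log (1 + cE d x₀ * (t : ℂ)))
      (f' := fun t : ℝ => cE d x₀ / (1 + cE d x₀ * (t : ℂ)))
      (fun t ht => by
        rw [Set.uIcc_of_le zero_le_one] at ht
        exact hasDerivAt_log_t d x₀ t (mem_slit d x₀ t hd ht.1))
      (ContinuousOn.intervalIntegrable (by
        rw [Set.uIcc_of_le zero_le_one]
        exact contOn_F' d x₀ hd))
    simpa using h
  rw [hFTC] at key
  have hfun : (fun x : ℝ => Li2 (-Complex.exp ((x : ℂ) + (d : ℂ) * Complex.I)))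
      = fun x : ℝ => -(∫ t in (0:ℝ)..1, Complex.log (1 + cE d x * (t : ℂ)) / (t : ℂ)) := by
    funext x
    simp [Li2, cE, neg_mul, sub_neg_eq_add]
  rw [hfun]
  exact key.neg

noncomputable def G (d x : ℝ) : ℝ :=
  (Complex.I * Li2 (-Complex.exp ((x : ℂ) + (d : ℂ) * Complex.I))).re

lemma G_eq (d x : ℝ) :
    G d x = -(Li2 (-Complex.exp ((x : ℂ) + (d : ℂ) * Complex.I))).im := by
  simp [G, Complex.mul_re]

lemma hasDerivAt_G (d : ℝ) (hd : Real.sin d ≠ 0) (x₀ : ℝ) :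
    HasDerivAt (G d)
      ((Complex.log (1 + Complex.exp ((x₀ : ℂ) + (d : ℂ) * Complex.I))).im) x₀ := by
  have h := hasDerivAt_Li2exp d hd x₀
  have him := Complex.imCLM.hasFDerivAt.comp_hasDerivAt x₀ h
  have := him.neg
  have hfun : (-((Complex.imCLM : ℂ → ℝ) ∘ fun x : ℝ =>
      Li2 (-Complex.exp ((x : ℂ) + (d : ℂ) * Complex.I)))) = G d := by
    funext x
    simp [G_eq, Function.comp]
  rw [hfun] at this
  simpa using this

lemma hasDerivAt_phi (d : ℝ) (hd : Real.sin d ≠ 0) (x : ℝ) :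
    HasDerivAt (fun x : ℝ => (Complex.log (1 + Complex.exp ((x : ℂ) + (d : ℂ) * Complex.I))).im)
      (Real.exp x * Real.sin d / Complex.normSq (1 + cE d x)) x := by
  have h := hasDerivAt_log_x d 1 x (mem_slit d x 1 hd zero_le_one)
  have him := Complex.imCLM.hasFDerivAt.comp_hasDerivAt x h
  have hval : (cE d x / (1 + cE d x)).im
      = Real.exp x * Real.sin d / Complex.normSq (1 + cE d x) := by
    rw [Complex.div_im, div_sub_div_same]
    congr 1
    simp [Complex.add_re, Complex.add_im, cE_re, cE_im]
    ring
  have hfun : (Complex.imCLM ∘ fun x : ℝ =>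
      Complex.log (1 + cE d x * ((1:ℝ) : ℂ)))
      = fun x : ℝ => (Complex.log (1 + Complex.exp ((x : ℂ) + (d : ℂ) * Complex.I))).im := by
    funext y
    simp [Function.comp, cE]
  rw [hfun] at him
  simpa [hval] using him

lemma G_strictConcave (d : ℝ) (hd : Real.sin d < 0) :
    StrictConcaveOn ℝ (Set.univ : Set ℝ) (G d) := by
  have hd' : Real.sin d ≠ 0 := hd.ne
  apply StrictAnti.strictConcaveOn_univ_of_deriv
  · exact Differentiable.continuous fun x => (hasDerivAt_G d hd' x).differentiableAt
  · have hderiv : deriv (G d) = fun x : ℝ =>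
        (Complex.log (1 + Complex.exp ((x : ℂ) + (d : ℂ) * Complex.I))).im :=
      funext fun x => (hasDerivAt_G d hd' x).deriv
    rw [hderiv]
    apply strictAnti_of_deriv_neg
    intro x
    rw [(hasDerivAt_phi d hd' x).deriv]
    apply div_neg_of_neg_of_pos
    · exact mul_neg_of_pos_of_neg (Real.exp_pos x) hd
    · have := normSq_pos d x 1 hd' zero_le_one
      simpa using this

lemma G_strictConvex (d : ℝ) (hd : 0 < Real.sin d) :
    StrictConvexOn ℝ (Set.univ : Set ℝ) (G d) := by
  have hd' : Real.sin d ≠ 0 := hd.ne'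
  apply StrictMono.strictConvexOn_univ_of_deriv
  · exact Differentiable.continuous fun x => (hasDerivAt_G d hd' x).differentiableAt
  · have hderiv : deriv (G d) = fun x : ℝ =>
        (Complex.log (1 + Complex.exp ((x : ℂ) + (d : ℂ) * Complex.I))).im :=
      funext fun x => (hasDerivAt_G d hd' x).deriv
    rw [hderiv]
    apply strictMono_of_deriv_pos
    intro x
    rw [(hasDerivAt_phi d hd' x).deriv]
    apply div_pos
    · exact mul_pos (Real.exp_pos x) hd
    · have := normSq_pos d x 1 hd' zero_le_one
      simpa using this

lemma decomp (d₁ d₂ d₃ : ℝ) (v : Fin 3 → ℝ) :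
    (pot ((v 0 : ℂ) + (d₁ : ℂ) * Complex.I) ((v 1 : ℂ) + (d₂ : ℂ) * Complex.I)
      ((v 2 : ℂ) + (d₃ : ℂ) * Complex.I)).re
    = ((d₂ - 2 * d₁ - π) * v 0 + (d₁ - d₃) * v 1 + (π - d₂ - d₃) * v 2)
      + G d₁ (v 0) - G d₂ (v 1) + 3 * G d₃ (v 2) := by
  simp only [pot, G, pow_two]
  simp [Complex.add_re, Complex.sub_re, Complex.mul_re, Complex.mul_im, Complex.add_im,
    Complex.sub_im, Complex.I_re, Complex.I_im, Complex.ofReal_re, Complex.ofReal_im,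
    Complex.div_re, Complex.div_im, Complex.normSq_apply, Complex.one_re, Complex.one_im,
    Complex.re_ofNat, Complex.im_ofNat, Complex.neg_re, Complex.neg_im]
  ring

lemma combo_le {h : ℝ → ℝ} (hh : StrictConcaveOn ℝ (Set.univ : Set ℝ) h) {a b : ℝ}
    (ha : 0 < a) (hb : 0 < b) (hab : a + b = 1) (p q : ℝ) :
    a * h p + b * h q ≤ h (a * p + b * q) := by
  have := hh.concaveOn.2 (Set.mem_univ p) (Set.mem_univ q) ha.le hb.le hab
  simpa [smul_eq_mul] using this

lemma combo_lt {h : ℝ → ℝ} (hh : StrictConcaveOn ℝ (Set.univ : Set ℝ) h) {a b : ℝ}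
    (ha : 0 < a) (hb : 0 < b) (hab : a + b = 1) {p q : ℝ} (hpq : p ≠ q) :
    a * h p + b * h q < h (a * p + b * q) := by
  have := hh.2 (Set.mem_univ p) (Set.mem_univ q) hpq ha hb hab
  simpa [smul_eq_mul] using this

/-- for admissible `d`, the function `x ↦ Re S(x + i d)` is
strictly concave on `ℝ³`. -/
theorem reS_strictConcave (d₁ d₂ d₃ : ℝ)
    (hd₁ : d₁ ∈ Set.Ioo (-π) 0) (hd₂ : d₂ ∈ Set.Ioo 0 π)
    (hd₃ : d₃ ∈ Set.Ioo (-π) 0) :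
    StrictConcaveOn ℝ (Set.univ : Set (Fin 3 → ℝ))
      (fun x : Fin 3 → ℝ =>
        (pot ((x 0 : ℂ) + (d₁ : ℂ) * Complex.I)
             ((x 1 : ℂ) + (d₂ : ℂ) * Complex.I)
             ((x 2 : ℂ) + (d₃ : ℂ) * Complex.I)).re) := by
  have hs₁ : Real.sin d₁ < 0 := Real.sin_neg_of_neg_of_neg_pi_lt hd₁.2 hd₁.1
  have hs₂ : 0 < Real.sin d₂ := Real.sin_pos_of_pos_of_lt_pi hd₂.1 hd₂.2
  have hs₃ : Real.sin d₃ < 0 := Real.sin_neg_of_neg_of_neg_pi_lt hd₃.2 hd₃.1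
  have SC₁ := G_strictConcave d₁ hs₁
  have SC₂ : StrictConcaveOn ℝ (Set.univ : Set ℝ) (fun t => -G d₂ t) :=
    (G_strictConvex d₂ hs₂).neg
  have SC₃ := G_strictConcave d₃ hs₃
  refine ⟨convex_univ, fun x _ y _ hxy a b ha hb hab => ?_⟩
  have hcase : x 0 ≠ y 0 ∨ x 1 ≠ y 1 ∨ x 2 ≠ y 2 := by
    by_contra h
    push_neg at h
    apply hxy
    funext i
    fin_cases i
    · exact h.1
    · exact h.2.1
    · exact h.2.2
  have h0le := combo_le SC₁ ha hb hab (x 0) (y 0)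
  have h1le := combo_le SC₂ ha hb hab (x 1) (y 1)
  have h2le := combo_le SC₃ ha hb hab (x 2) (y 2)
  have hdx := decomp d₁ d₂ d₃ x
  have hdy := decomp d₁ d₂ d₃ y
  have hdz := decomp d₁ d₂ d₃ (fun i => a * x i + b * y i)
  beta_reduce at hdz
  simp only [smul_eq_mul, hdx, hdy, Pi.add_apply, Pi.smul_apply]
  rw [hdz]
  rcases hcase with hc | hc | hc
  · have h0lt := combo_lt SC₁ ha hb hab hc
    linarith
  · have h1lt := combo_lt SC₂ ha hb hab hc
    linarith
  · have h2lt := combo_lt SC₃ ha hb hab hc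
    linarith
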